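/- The function c ↦ E[L(Z + c)] is differentiable on ℝ with derivative (d/dc) E[L(Z + c)] = (k₁ − k₂)/2 + sgn(c)(k₁ + k₂) ∫₀^{|c|} f(z) dz, where sgn(c) = 1 for c ≥ 0 and sgn(c) = −1 for c < 0. -/

import Mathlib

open MeasureTheory ProbabilityTheory Set Filter

/-- The function `c ↦ E[L(Z + c)]` is differentiable with derivative
`(k₁ − k₂)/2 + sgn(c)(k₁ + k₂) ∫₀^{|c|} f(z) dz` at each `c`, where
`sgn(c) = 1` for `c ≥ 0` and `−1` for `c < 0`. -/
theorem hasDerivAt_expectation_loss_shift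
    {Ω : Type*} [MeasurableSpace Ω] (μ : Measure Ω) [IsProbabilityMeasure μ]
    (f : ℝ → ℝ) (hf_cont : Continuous f) (hf_nonneg : ∀ x, 0 ≤ f x)
    (hf_total : ∫ z, f z = 1)
    (hf_symm : ∀ x, f (-x) = f x)
    (hf_mono : ∀ x y : ℝ, 0 ≤ x → x ≤ y → f y ≤ f x)
    (Z : Ω → ℝ) (hZ : Measurable Z)
    (hdens : Measure.map Z μ = volume.withDensity (fun z => ENNReal.ofReal (f z)))
    (hmom : Integrable (fun z => z ^ 2 * f z))
    (k₁ k₂ : ℝ) (hk₁ : 0 < k₁) (hk₂ : 0 < k₂)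
    (L : ℝ → ℝ) (hL : ∀ z, L z = if 0 ≤ z then k₁ * z else -k₂ * z) :
    ∀ c : ℝ, HasDerivAt (fun c : ℝ => ∫ ω, L (Z ω + c) ∂μ)
      ((k₁ - k₂) / 2
        + (if 0 ≤ c then (1:ℝ) else -1) * (k₁ + k₂) * (∫ z in (0:ℝ)..|c|, f z)) c := by
  intro c₀
  have hfm : Measurable f := hf_cont.measurable
  have hLmeas : Measurable L := by
    have : L = fun z => if 0 ≤ z then k₁ * z else -k₂ * z := funext hL
    rw [this]
    exact Measurable.ite (measurableSet_le measurable_const measurable_id)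
      (measurable_id.const_mul k₁) (measurable_id.const_mul (-k₂))
  have hLlip : ∀ a b : ℝ, |L a - L b| ≤ (k₁ + k₂) * |a - b| := by
    intro a b
    rcases le_or_gt 0 a with ha | ha <;> rcases le_or_gt 0 b with hb | hb
    · rw [hL, hL, if_pos ha, if_pos hb, ← mul_sub, abs_mul, abs_of_pos hk₁]
      nlinarith [abs_nonneg (a - b)]
    · rw [hL, hL, if_pos ha, if_neg (not_le.mpr hb), abs_of_pos (show (0:ℝ) < a - b by linarith)]
      rw [abs_le]; constructor <;> nlinarith
    · rw [hL, hL, if_neg (not_le.mpr ha), if_pos hb, abs_of_neg (show a - b < 0 by linarith)]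
      rw [abs_le]; constructor <;> nlinarith
    · rw [hL, hL, if_neg (not_le.mpr ha), if_neg (not_le.mpr hb)]
      have : -k₂ * a - -k₂ * b = -k₂ * (a - b) := by ring
      rw [this, abs_mul, abs_of_neg (show -k₂ < 0 by linarith)]
      nlinarith [abs_nonneg (a - b)]
  have hL0 : L 0 = 0 := by rw [hL]; simp
  have hLbound : ∀ x, |L x| ≤ (k₁ + k₂) * |x| := by
    intro x
    have := hLlip x 0
    simpa [hL0] using this
  have hInt_f : Integrable f := by
    by_contra h
    rw [integral_undef h] at hf_total; norm_num at hf_total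
  have hInt_absf : Integrable (fun z => |z| * f z) := by
    refine (hInt_f.add hmom).mono ((measurable_abs.mul hfm).aestronglyMeasurable)
      (ae_of_all _ fun z => ?_)
    have h1 : 0 ≤ f z := hf_nonneg z
    have h2 : |z| ≤ 1 + z ^ 2 := by nlinarith [abs_nonneg z, sq_abs z]
    have h3 : (0:ℝ) ≤ f z + z ^ 2 * f z := by positivity
    simp only [Pi.add_apply, Real.norm_eq_abs, abs_mul, abs_abs, abs_of_nonneg h1,
      abs_of_nonneg h3]
    nlinarith
  -- change of variables
  have hCoV : ∀ g : ℝ → ℝ, Measurable g → ∫ ω, g (Z ω) ∂μ = ∫ z, g z * f z := by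
    intro g hg
    have h1 : ∫ ω, g (Z ω) ∂μ = ∫ z, g z ∂(Measure.map Z μ) :=
      (integral_map hZ.aemeasurable hg.aestronglyMeasurable).symm
    rw [h1, hdens]
    have h2 : (fun z => ENNReal.ofReal (f z))
        = (fun z => (((f z).toNNReal : NNReal) : ENNReal)) := rfl
    rw [h2, integral_withDensity_eq_integral_smul (hfm.real_toNNReal) g]
    congr 1; funext z
    rw [NNReal.smul_def, Real.coe_toNNReal _ (hf_nonneg z), smul_eq_mul, mul_comm]
  have hIntCoV : ∀ g : ℝ → ℝ, Measurable g → Integrable (fun z => g z * f z) →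
      Integrable (fun ω => g (Z ω)) μ := by
    intro g hg hint
    have h1 : Integrable g (Measure.map Z μ) := by
      rw [hdens, integrable_withDensity_iff (hfm.ennreal_ofReal)
        (ae_of_all _ fun z => ENNReal.ofReal_lt_top)]
      have h2 : (fun x => g x * (ENNReal.ofReal (f x)).toReal) = fun z => g z * f z :=
        funext fun z => by rw [ENNReal.toReal_ofReal (hf_nonneg z)]
      rw [h2]; exact hint
    exact (integrable_map_measure hg.aestronglyMeasurable hZ.aemeasurable).mp h1
  set D : ℝ → ℝ := fun z => if -c₀ < z then k₁ else -k₂ with hDdef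
  have hDmeas : Measurable D :=
    Measurable.ite (measurableSet_lt measurable_const measurable_id)
      measurable_const measurable_const
  have hmap0 : μ (Z ⁻¹' {-c₀}) = 0 := by
    rw [← Measure.map_apply hZ (measurableSet_singleton _), hdens]
    exact (withDensity_absolutelyContinuous volume _) (measure_singleton _)
  have hae : ∀ᵐ ω ∂μ, Z ω ≠ -c₀ := by
    rw [ae_iff]
    have h : {ω | ¬ Z ω ≠ -c₀} = Z ⁻¹' {-c₀} := by ext ω; simp
    rw [h]; exact hmap0
  have h_diff : ∀ᵐ ω ∂μ, HasDerivAt (fun x => L (Z ω + x)) (D (Z ω)) c₀ := by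
    filter_upwards [hae] with ω hω
    rcases lt_or_gt_of_ne hω with hlt | hgt
    · have hD : D (Z ω) = -k₂ := if_neg (not_lt.mpr hlt.le)
      rw [hD]
      have hev : (fun x => L (Z ω + x)) =ᶠ[nhds c₀] fun x => -k₂ * (Z ω + x) := by
        have hopen : IsOpen {x : ℝ | Z ω + x < 0} :=
          isOpen_lt (continuous_const.add continuous_id) continuous_const
        have hmem : c₀ ∈ {x : ℝ | Z ω + x < 0} := by
          simp only [mem_setOf_eq]; linarith
        filter_upwards [hopen.mem_nhds hmem] with x hx
        rw [hL, if_neg (not_le.mpr hx)]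
      have hbase : HasDerivAt (fun x : ℝ => -k₂ * (Z ω + x)) (-k₂) c₀ := by
        simpa using ((hasDerivAt_id c₀).const_add (Z ω)).const_mul (-k₂)
      exact hbase.congr_of_eventuallyEq hev
    · have hD : D (Z ω) = k₁ := if_pos hgt
      rw [hD]
      have hev : (fun x => L (Z ω + x)) =ᶠ[nhds c₀] fun x => k₁ * (Z ω + x) := by
        have hopen : IsOpen {x : ℝ | 0 < Z ω + x} :=
          isOpen_lt continuous_const (continuous_const.add continuous_id)
        have hmem : c₀ ∈ {x : ℝ | 0 < Z ω + x} := by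
          simp only [mem_setOf_eq]; linarith
        filter_upwards [hopen.mem_nhds hmem] with x hx
        rw [hL, if_pos hx.le]
      have hbase : HasDerivAt (fun x : ℝ => k₁ * (Z ω + x)) k₁ c₀ := by
        simpa using ((hasDerivAt_id c₀).const_add (Z ω)).const_mul k₁
      exact hbase.congr_of_eventuallyEq hev
  have hZabs : Integrable (fun ω => |Z ω|) μ :=
    hIntCoV (fun z => |z|) measurable_abs hInt_absf
  have hF_int : Integrable (fun ω => L (Z ω + c₀)) μ := by
    refine ((hZabs.add (integrable_const |c₀|)).const_mul (k₁ + k₂)).mono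
      ((hLmeas.comp (hZ.add_const c₀)).aestronglyMeasurable) (ae_of_all _ fun ω => ?_)
    simp only [Real.norm_eq_abs]
    calc |L (Z ω + c₀)| ≤ (k₁ + k₂) * |Z ω + c₀| := hLbound _
      _ ≤ (k₁ + k₂) * (|Z ω| + |c₀|) :=
          mul_le_mul_of_nonneg_left (abs_add_le _ _) (by linarith)
      _ ≤ |(k₁ + k₂) * (|Z ω| + |c₀|)| := le_abs_self _
  have h_lip : ∀ᵐ ω ∂μ, LipschitzOnWith (Real.nnabs (k₁ + k₂))
      (fun x => L (Z ω + x)) (Metric.ball c₀ 1) := by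
    refine ae_of_all _ fun ω => LipschitzWith.lipschitzOnWith ?_
    refine LipschitzWith.of_dist_le_mul fun a b => ?_
    rw [Real.dist_eq, Real.dist_eq]
    have hcoe : ((Real.nnabs (k₁ + k₂) : NNReal) : ℝ) = k₁ + k₂ := by
      rw [Real.coe_nnabs, abs_of_pos (by linarith)]
    rw [hcoe]
    calc |L (Z ω + a) - L (Z ω + b)| ≤ (k₁ + k₂) * |(Z ω + a) - (Z ω + b)| := hLlip _ _
      _ = (k₁ + k₂) * |a - b| := by congr 1; congr 1; ring
  have key := (hasDerivAt_integral_of_dominated_loc_of_lip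
      (F := fun x ω => L (Z ω + x)) (μ := μ) (F' := fun ω => D (Z ω))
      (bound := fun _ => k₁ + k₂) (Metric.ball_mem_nhds c₀ one_pos)
      (Filter.Eventually.of_forall fun x => (hLmeas.comp (hZ.add_const x)).aestronglyMeasurable)
      hF_int ((hDmeas.comp hZ).aestronglyMeasurable) h_lip (integrable_const _) h_diff).2
  -- compute the derivative value
  have hDint : ∫ ω, D (Z ω) ∂μ = ∫ z, D z * f z := hCoV D hDmeas
  have hIntDf : Integrable (fun z => D z * f z) := by
    refine (hInt_f.const_mul (k₁ + k₂)).mono ((hDmeas.mul hfm).aestronglyMeasurable)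
      (ae_of_all _ fun z => ?_)
    have h1 : |D z| ≤ k₁ + k₂ := by
      rw [hDdef]; dsimp only; split
      · rw [abs_of_pos hk₁]; linarith
      · rw [abs_of_neg (neg_lt_zero.mpr hk₂)]; linarith
    simp only [Real.norm_eq_abs, abs_mul, abs_of_nonneg (hf_nonneg z)]
    rw [abs_of_pos (show (0:ℝ) < k₁ + k₂ by linarith)]
    exact mul_le_mul_of_nonneg_right h1 (hf_nonneg z)
  have hsplit : ∫ z, D z * f z
      = (∫ z in Iic (-c₀), D z * f z) + ∫ z in Ioi (-c₀), D z * f z := by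
    rw [← compl_Iic, integral_add_compl measurableSet_Iic hIntDf]
  have h1 : ∫ z in Iic (-c₀), D z * f z = -k₂ * ∫ z in Iic (-c₀), f z := by
    have he : EqOn (fun z => D z * f z) (fun z => -k₂ * f z) (Iic (-c₀)) := fun z hz => by
      simp only [hDdef, if_neg (not_lt.mpr (mem_Iic.mp hz))]
    rw [setIntegral_congr_fun measurableSet_Iic he, integral_const_mul]
  have h2 : ∫ z in Ioi (-c₀), D z * f z = k₁ * ∫ z in Ioi (-c₀), f z := by
    have he : EqOn (fun z => D z * f z) (fun z => k₁ * f z) (Ioi (-c₀)) := fun z hz => by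
      simp only [hDdef, if_pos (mem_Ioi.mp hz)]
    rw [setIntegral_congr_fun measurableSet_Ioi he, integral_const_mul]
  have hIic0 : ∫ z in Iic (0:ℝ), f z = 1 / 2 := by
    have hs : ∫ z in Ioi (0:ℝ), f (-z) = ∫ z in Iic (-(0:ℝ)), f z := integral_comp_neg_Ioi 0 f
    simp only [hf_symm, neg_zero] at hs
    have hsum : (∫ z in Iic (0:ℝ), f z) + ∫ z in Ioi (0:ℝ), f z = 1 := by
      rw [← compl_Iic, integral_add_compl measurableSet_Iic hInt_f] at *
      exact hf_total
    linarith
  have hIoi : ∫ z in Ioi (-c₀), f z = 1 / 2 + ∫ z in (0:ℝ)..c₀, f z := by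
    have hs : ∫ z in Ioi (-c₀), f (-z) = ∫ z in Iic c₀, f z := by
      have := integral_comp_neg_Ioi (-c₀) f
      rwa [neg_neg] at this
    simp only [hf_symm] at hs
    have hIc : (∫ z in Iic c₀, f z) - ∫ z in Iic (0:ℝ), f z = ∫ z in (0:ℝ)..c₀, f z :=
      intervalIntegral.integral_Iic_sub_Iic hInt_f.integrableOn hInt_f.integrableOn
    rw [← hs] at hIc
    rw [hIic0] at hIc
    linarith
  have hIicc : ∫ z in Iic (-c₀), f z = 1 / 2 - ∫ z in (0:ℝ)..c₀, f z := by
    have hsum : (∫ z in Iic (-c₀), f z) + ∫ z in Ioi (-c₀), f z = 1 := by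
      rw [← compl_Iic, integral_add_compl measurableSet_Iic hInt_f]
      exact hf_total
    rw [hIoi] at hsum
    linarith
  have hval : ∫ ω, D (Z ω) ∂μ
      = (k₁ - k₂) / 2 + (k₁ + k₂) * ∫ z in (0:ℝ)..c₀, f z := by
    rw [hDint, hsplit, h1, h2, hIoi, hIicc]; ring
  have htarg : (k₁ - k₂) / 2
      + (if 0 ≤ c₀ then (1:ℝ) else -1) * (k₁ + k₂) * (∫ z in (0:ℝ)..|c₀|, f z)
      = (k₁ - k₂) / 2 + (k₁ + k₂) * ∫ z in (0:ℝ)..c₀, f z := by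
    rcases le_or_gt 0 c₀ with h | h
    · rw [if_pos h, abs_of_nonneg h]; ring
    · rw [if_neg (not_le.mpr h), abs_of_neg h]
      have hodd : ∫ z in (0:ℝ)..(-c₀), f z = -∫ z in (0:ℝ)..c₀, f z := by
        have h1 : ∫ z in (0:ℝ)..(-c₀), f (-z) = ∫ z in (c₀:ℝ)..(0:ℝ), f z := by
          simpa using intervalIntegral.integral_comp_neg (a := (0:ℝ)) (b := -c₀) (f := f)
        simp only [hf_symm] at h1
        rw [h1, intervalIntegral.integral_symm]
      rw [hodd]; ring
  rw [htarg, ← hval]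
  exact key
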